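/- Fix λ ∈ S¹ not a root of unity. One can choose coefficients a_j ∈ {0,1} for j ≥ 2 inductively so that |a_j + X_j| ≥ 1/2 for all j ≥ 2, where h_j = (a_j + X_j)/(λ^j − λ) are the coefficients of the formal linearization of f(z) = λz + Σ a_j z^j and X_j is the universal polynomial in a₂,…,a_{j−1},h₂,…,h_{j−1} from the linearization recursion; consequently |h_j| ≥ 1/(2|λ^j − λ|) for all j ≥ 2. -/

import Mathlib

open FormalMultilinearSeries

private theorem cremer_comp_coeff_eq (a h : ℕ → ℂ) (n : ℕ) :
    ((ofScalars ℂ a).comp (ofScalars ℂ h)).coeff n =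
      ∑ c : Composition n, a c.length * ∏ i, h (c.blocksFun i) := by
  rw [FormalMultilinearSeries.coeff, FormalMultilinearSeries.comp]
  rw [ContinuousMultilinearMap.sum_apply]
  refine Finset.sum_congr rfl fun c _ => ?_
  rw [compAlongComposition_apply]
  have : (ofScalars ℂ h).applyComposition c (1 : Fin n → ℂ) = fun i => h (c.blocksFun i) := by
    funext i
    simp [FormalMultilinearSeries.applyComposition, ofScalars, smul_eq_mul, List.prod_ofFn,
      Function.comp_def]
  rw [this]
  simp [ofScalars, smul_eq_mul, List.prod_ofFn, Function.comp_def]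

/-- The universal polynomial term in the linearization recursion. -/
noncomputable def cremerY (a h : ℕ → ℂ) (n : ℕ) : ℂ :=
  ∑ c ∈ Finset.univ.filter (fun c : Composition n => 2 ≤ c.length ∧ c.length < n),
    a c.length * ∏ i, h (c.blocksFun i)

theorem cremerY_congr {a a' h h' : ℕ → ℂ} {n : ℕ}
    (ha : ∀ k < n, a k = a' k) (hh : ∀ k < n, h k = h' k) :
    cremerY a h n = cremerY a' h' n := by
  refine Finset.sum_congr rfl fun c hc => ?_
  simp only [Finset.mem_filter] at hc
  have hn0 : 0 < n := lt_of_le_of_lt (Nat.le_of_lt (by omega)) hc.2.2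
  rw [ha _ hc.2.2]
  congr 1
  refine Finset.prod_congr rfl fun i _ => ?_
  refine hh _ ?_
  have hne : c ≠ Composition.single n hn0 := by
    rw [Ne, Composition.eq_single_iff_length hn0]; omega
  exact (Composition.ne_single_iff hn0).mp hne i

theorem cremer_sum_split (a h : ℕ → ℂ) {n : ℕ} (hn : 2 ≤ n) (h1 : h 1 = 1) :
    ∑ c : Composition n, a c.length * ∏ i, h (c.blocksFun i) =
      a 1 * h n + a n + cremerY a h n := by
  classical
  have hn0 : 0 < n := by omega
  have key : ∀ c : Composition n, ¬(2 ≤ c.length ∧ c.length < n) ↔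
      (c = Composition.single n hn0 ∨ c = Composition.ones n) := by
    intro c
    rw [Composition.eq_single_iff_length hn0, Composition.eq_ones_iff_length]
    have h1 := c.length_le
    have h2 := c.length_pos_of_pos hn0
    omega
  rw [← Finset.sum_filter_add_sum_filter_not Finset.univ
    (fun c : Composition n => 2 ≤ c.length ∧ c.length < n)]
  have hset : Finset.univ.filter (fun c : Composition n => ¬(2 ≤ c.length ∧ c.length < n)) =
      {Composition.single n hn0, Composition.ones n} := by
    ext c
    simp only [Finset.mem_filter, Finset.mem_univ, true_and, Finset.mem_insert,
      Finset.mem_singleton]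
    exact key c
  rw [hset, Finset.sum_pair]
  · have t1 : a (Composition.single n hn0).length *
        ∏ i, h ((Composition.single n hn0).blocksFun i) = a 1 * h n := by
      rw [Finset.prod_congr rfl (fun i _ => congrArg h (Composition.single_blocksFun hn0 i)),
        Finset.prod_const, Finset.card_univ, Fintype.card_fin, Composition.single_length hn0, pow_one]
    have t2 : a (Composition.ones n).length *
        ∏ i, h ((Composition.ones n).blocksFun i) = a n := by
      simp [Composition.ones_length, Composition.ones_blocksFun, h1]
    rw [t1, t2]
    unfold cremerY
    ring
  · intro he
    have := congrArg Composition.length he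
    rw [Composition.single_length hn0, Composition.ones_length] at this
    omega

/-- Simultaneous recursive construction of the coefficients `a` (first component)
and the linearization coefficients `h` (second component). -/
noncomputable def cremerP (lam : ℂ) : ℕ → ℂ × ℂ
  | 0 => (0, 0)
  | 1 => (lam, 1)
  | (n+2) =>
    let a' : ℕ → ℂ := fun k => if _ : k < n+2 then (cremerP lam k).1 else 0
    let h' : ℕ → ℂ := fun k => if _ : k < n+2 then (cremerP lam k).2 else 0
    let Y := cremerY a' h' (n+2)
    let an : ℂ := if 1/2 ≤ ‖Y‖ then 0 else 1
    (an, (an + Y) / (lam ^ (n+2) - lam))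

theorem cremerP_add_two (lam : ℂ) (m : ℕ) :
    cremerP lam (m+2) =
      (let Y := cremerY (fun k => (cremerP lam k).1) (fun k => (cremerP lam k).2) (m+2)
       let an : ℂ := if 1/2 ≤ ‖Y‖ then 0 else 1
       (an, (an + Y) / (lam ^ (m+2) - lam))) := by
  rw [cremerP]
  have hY : cremerY (fun k => if _ : k < m+2 then (cremerP lam k).1 else 0)
      (fun k => if _ : k < m+2 then (cremerP lam k).2 else 0) (m+2) =
      cremerY (fun k => (cremerP lam k).1) (fun k => (cremerP lam k).2) (m+2) :=
    cremerY_congr (fun k hk => by simp [hk]) (fun k hk => by simp [hk])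
  simp only [hY]

theorem cremerP_fst (lam : ℂ) (m : ℕ) :
    (cremerP lam (m+2)).1 =
      if 1/2 ≤ ‖cremerY (fun k => (cremerP lam k).1) (fun k => (cremerP lam k).2) (m+2)‖
        then 0 else 1 := by
  rw [cremerP_add_two]

theorem cremerP_snd (lam : ℂ) (m : ℕ) :
    (cremerP lam (m+2)).2 =
      ((cremerP lam (m+2)).1 +
        cremerY (fun k => (cremerP lam k).1) (fun k => (cremerP lam k).2) (m+2)) /
        (lam ^ (m+2) - lam) := by
  conv_lhs => rw [cremerP_add_two]
  rw [cremerP_fst]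

/-- Cremer's construction. For `λ` of modulus one, not a root of unity,
one can choose coefficients `a_j ∈ {0,1}` (`j ≥ 2`) such that, `h` being the formal
linearization of `f(z) = λ z + Σ_{j≥2} a_j z^j` (i.e. `h 0 = 0`, `h 1 = 1` and
`h(λz) = f(h(z))` as formal series), one has `|a_j + X_j| ≥ 1/2` for all `j ≥ 2` —
where `X_j = (λ^j − λ) h_j − a_j` is the quantity from the linearization recursion
`h_j = (a_j + X_j)/(λ^j − λ)` — and consequently `|h_j| ≥ 1/(2 |λ^j − λ|)`. -/
theorem cremer_coefficient_choice (lam : ℂ) (hlam : ‖lam‖ = 1)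
    (hroot : ∀ n : ℕ, 0 < n → lam ^ n ≠ 1) :
    ∃ a : ℕ → ℂ, a 0 = 0 ∧ a 1 = lam ∧
      (∀ j : ℕ, 2 ≤ j → a j = 0 ∨ a j = 1) ∧
      ∀ h : ℕ → ℂ,
        (h 0 = 0 ∧ h 1 = 1 ∧
          ∀ n : ℕ, h n * lam ^ n =
            ((ofScalars ℂ a).comp (ofScalars ℂ h)).coeff n) →
        ∀ j : ℕ, 2 ≤ j →
          (1 : ℝ) / 2 ≤ ‖a j + ((lam ^ j - lam) * h j - a j)‖ ∧
          1 / (2 * ‖lam ^ j - lam‖) ≤ ‖h j‖ := by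
  have hlam0 : lam ≠ 0 := by
    intro h; rw [h, norm_zero] at hlam; norm_num at hlam
  have hd : ∀ j : ℕ, 2 ≤ j → lam ^ j - lam ≠ 0 := by
    intro j hj he
    have : lam ^ j = lam := by linear_combination he
    have h1 : lam ^ (j-1) * lam = 1 * lam := by
      rw [one_mul, ← pow_succ]
      rw [show j - 1 + 1 = j by omega, this]
    have := mul_right_cancel₀ hlam0 h1
    exact hroot (j-1) (by omega) this
  set a : ℕ → ℂ := fun n => (cremerP lam n).1 with ha_def
  set H : ℕ → ℂ := fun n => (cremerP lam n).2 with hH_def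
  set Y : ℕ → ℂ := fun n => cremerY a H n with hY_def
  have ha0 : a 0 = 0 := by simp [ha_def, cremerP]
  have ha1 : a 1 = lam := by simp [ha_def, cremerP]
  have hH0 : H 0 = 0 := by simp [hH_def, cremerP]
  have hH1 : H 1 = 1 := by simp [hH_def, cremerP]
  have haj : ∀ j : ℕ, 2 ≤ j → a j = if 1/2 ≤ ‖Y j‖ then 0 else 1 := by
    intro j hj
    obtain ⟨m, rfl⟩ : ∃ m, j = m + 2 := ⟨j - 2, by omega⟩
    exact cremerP_fst lam m
  have hHj : ∀ j : ℕ, 2 ≤ j → H j = (a j + Y j) / (lam ^ j - lam) := by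
    intro j hj
    obtain ⟨m, rfl⟩ : ∃ m, j = m + 2 := ⟨j - 2, by omega⟩
    exact cremerP_snd lam m
  have hbound : ∀ j : ℕ, 2 ≤ j → (1:ℝ)/2 ≤ ‖a j + Y j‖ := by
    intro j hj
    rw [haj j hj]
    by_cases hc : (1:ℝ)/2 ≤ ‖Y j‖
    · rw [if_pos hc, zero_add]; exact hc
    · rw [if_neg hc]
      push_neg at hc
      have h2 := norm_sub_norm_le (1 : ℂ) (-(Y j))
      rw [sub_neg_eq_add, norm_neg, norm_one] at h2
      linarith
  refine ⟨a, ha0, ha1, ?_, ?_⟩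
  · intro j hj
    rw [haj j hj]
    split_ifs with hc
    · exact Or.inl rfl
    · exact Or.inr rfl
  intro h ⟨hh0, hh1, hcomp⟩ j hj
  -- uniqueness: h = H
  have huniq : ∀ n, h n = H n := by
    intro n
    induction n using Nat.strong_induction_on with
    | _ n ih =>
      match n, ih with
      | 0, _ => rw [hh0, hH0]
      | 1, _ => rw [hh1, hH1]
      | (m+2), ih =>
        have hn2 : 2 ≤ m + 2 := by omega
        have hc := hcomp (m+2)
        rw [cremer_comp_coeff_eq, cremer_sum_split a h hn2 hh1] at hc
        have hYeq : cremerY a h (m+2) = Y (m+2) :=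
          cremerY_congr (fun k _ => rfl) (fun k hk => ih k hk)
        rw [hYeq, ha1] at hc
        have heq : (lam ^ (m+2) - lam) * h (m+2) = a (m+2) + Y (m+2) := by
          linear_combination hc
        rw [hHj _ hn2, eq_div_iff (hd _ hn2)]
        linear_combination heq
  have hj' := huniq j
  have heq : (lam ^ j - lam) * h j = a j + Y j := by
    rw [hj', hHj _ hj, mul_div_cancel₀ _ (hd _ hj)]
  constructor
  · have : a j + ((lam ^ j - lam) * h j - a j) = a j + Y j := by rw [heq]; ring
    rw [this]
    exact hbound j hj
  · have hnorm : ‖lam ^ j - lam‖ * ‖h j‖ = ‖a j + Y j‖ := by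
      rw [← norm_mul, heq]
    have hdn : (0:ℝ) < ‖lam ^ j - lam‖ := norm_pos_iff.mpr (hd _ hj)
    rw [div_le_iff₀ (by positivity)]
    have := hbound j hj
    nlinarith [hnorm, norm_nonneg (h j)]
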